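/- Define p_M = min(2, p') where p' > 1 solves p'·ln p' − (p'−1) = M, and q_M ∈ (0,1) solves ln(1/q_M) − (1−q_M) = M. Then the ratio E(p_M||q_M)/M tends to 4 as M → 0⁺ and tends to 2 as M → ∞, where E(p||q) = p·ln(p/q) − (p−q). -/

import Mathlib

open Filter Set Topology

noncomputable def F (p : ℝ) : ℝ := p * Real.log p - (p - 1)
noncomputable def G (q : ℝ) : ℝ := -Real.log q - (1 - q)

lemma F_hasDeriv {x : ℝ} (hx : x ≠ 0) : HasDerivAt F (Real.log x) x := by
  have h : HasDerivAt F (1 * Real.log x + x * x⁻¹ - 1) x :=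
    ((hasDerivAt_id x).mul (Real.hasDerivAt_log hx)).sub ((hasDerivAt_id x).sub_const 1)
  simpa [mul_inv_cancel₀ hx] using h

lemma F_mono : StrictMonoOn F (Set.Ici 1) := by
  apply strictMonoOn_of_deriv_pos (convex_Ici 1)
  · apply ContinuousOn.sub
    · exact continuousOn_id.mul (Real.continuousOn_log.mono (by
        intro x hx; simp at hx ⊢; intro h; rw [h] at hx; linarith))
    · fun_prop
  · intro x hx
    rw [interior_Ici] at hx
    rw [(F_hasDeriv (by linarith [hx.out] : x ≠ 0)).deriv]
    exact Real.log_pos hx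

lemma G_hasDeriv {x : ℝ} (hx : x ≠ 0) : HasDerivAt G (1 - x⁻¹) x := by
  have h : HasDerivAt G (-x⁻¹ - (0 - 1)) x :=
    ((Real.hasDerivAt_log hx).neg).sub ((hasDerivAt_const x 1).sub (hasDerivAt_id x))
  simpa using h.congr_deriv (by ring)

lemma G_anti : StrictAntiOn G (Set.Ioc 0 1) := by
  apply strictAntiOn_of_deriv_neg (convex_Ioc 0 1)
  · apply ContinuousOn.sub
    · exact (Real.continuousOn_log.mono (by
        intro x hx; simp at hx ⊢; exact ne_of_gt hx.1)).neg
    · fun_prop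
  · intro x hx
    rw [interior_Ioc] at hx
    rw [(G_hasDeriv hx.1.ne').deriv]
    have : 1 < x⁻¹ := (one_lt_inv_iff₀).2 ⟨hx.1, hx.2⟩
    linarith

lemma lim1 : Tendsto (fun p : ℝ => F p / (p - 1) ^ 2) (𝓝[>] (1:ℝ)) (𝓝 (1/2)) := by
  apply HasDerivAt.lhopital_zero_nhdsGT
    (f' := fun p => Real.log p) (g' := fun p => 2 * (p - 1))
  · filter_upwards [self_mem_nhdsWithin] with x hx
    exact F_hasDeriv (by simp at hx; linarith)
  · filter_upwards with x
    have h : HasDerivAt (fun y : ℝ => (y - 1) ^ 2) (↑2 * (x - 1) ^ (2 - 1) * 1) x :=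
      ((hasDerivAt_id x).sub_const 1).pow 2
    simpa using h
  · filter_upwards [self_mem_nhdsWithin] with x hx
    simp at hx; intro h; nlinarith
  · have : ContinuousAt F 1 := by
      have := (F_hasDeriv (one_ne_zero)).continuousAt
      exact this
    have h0 : F 1 = 0 := by simp [F]
    rw [← h0]
    exact this.continuousWithinAt.tendsto
  · have h : Tendsto (fun p : ℝ => (p - 1) ^ 2) (𝓝 (1:ℝ)) (𝓝 ((1 - 1) ^ 2)) :=
      ((continuous_id.sub continuous_const).pow 2).tendsto 1
    simp only [sub_self] at h
    simpa using h.mono_left nhdsWithin_le_nhds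
  · -- log p / (2 (p-1)) → 1/2
    have hslope : Tendsto (fun p : ℝ => Real.log p / (p - 1)) (𝓝[>] (1:ℝ)) (𝓝 1) := by
      have h0 := hasDerivAt_iff_tendsto_slope.1 (Real.hasDerivAt_log one_ne_zero)
      have h1 : Tendsto (slope Real.log 1) (𝓝[>] (1:ℝ)) (𝓝 1) := by
        simpa using h0.mono_left (nhdsWithin_mono 1 (fun x hx => by
          simpa using (ne_of_gt hx : x ≠ 1)))
      exact h1.congr (fun x => by simp [slope_def_field])
    have h2 := hslope.const_mul (1/2 : ℝ)
    rw [mul_one] at h2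
    exact h2.congr (fun x => by simp [div_eq_mul_inv, mul_inv]; ring)

lemma lim2 : Tendsto (fun q : ℝ => G q / (1 - q) ^ 2) (𝓝[<] (1:ℝ)) (𝓝 (1/2)) := by
  apply HasDerivAt.lhopital_zero_nhdsLT
    (f' := fun q => 1 - q⁻¹) (g' := fun q => 2 * (q - 1))
  · filter_upwards [Ioo_mem_nhdsLT_of_mem (by norm_num : (1:ℝ) ∈ Set.Ioc 0 1)] with x hx
    exact G_hasDeriv hx.1.ne'
  · filter_upwards with x
    have h : HasDerivAt (fun q : ℝ => (1 - q) ^ 2) (2 * (1 - x) ^ 1 * (0 - 1)) x :=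
      (((hasDerivAt_const x 1).sub (hasDerivAt_id x)).pow 2)
    simpa using h.congr_deriv (by ring)
  · filter_upwards [self_mem_nhdsWithin] with x hx
    simp at hx; intro h; nlinarith
  · have : ContinuousAt G 1 := (G_hasDeriv one_ne_zero).continuousAt
    have h0 : G 1 = 0 := by simp [G]
    rw [← h0]
    exact this.continuousWithinAt.tendsto
  · have h : Tendsto (fun q : ℝ => (1 - q) ^ 2) (𝓝 (1:ℝ)) (𝓝 ((1-1)^2)) :=
      ((continuous_const.sub continuous_id).pow 2).tendsto 1
    simp only [sub_self] at h
    simpa using h.mono_left nhdsWithin_le_nhds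
  · have hc : Tendsto (fun q : ℝ => 1 / (2 * q)) (𝓝[<] (1:ℝ)) (𝓝 (1/2)) := by
      have h : Tendsto (fun q : ℝ => 1 / (2 * q)) (𝓝 (1:ℝ)) (𝓝 (1 / (2 * 1))) :=
        (ContinuousAt.div continuousAt_const
          ((continuous_const.mul continuous_id).continuousAt) (by norm_num)).tendsto
      simpa using h.mono_left nhdsWithin_le_nhds
    apply hc.congr'
    filter_upwards [Ioo_mem_nhdsLT_of_mem (by norm_num : (1:ℝ) ∈ Set.Ioc 0 1)] with x hx
    have hx0 : x ≠ 0 := ne_of_gt hx.1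
    have hx1 : x - 1 ≠ 0 := sub_ne_zero.2 (ne_of_lt hx.2)
    field_simp

noncomputable def E (p q : ℝ) : ℝ := p * Real.log (p / q) - (p - q)

theorem ratio_limits (p' q : ℝ → ℝ)
    (hp : ∀ M : ℝ, 0 < M → 1 < p' M ∧ p' M * Real.log (p' M) - (p' M - 1) = M)
    (hq : ∀ M : ℝ, 0 < M → q M ∈ Set.Ioo (0:ℝ) 1 ∧
      Real.log (1 / q M) - (1 - q M) = M) :
    Filter.Tendsto (fun M : ℝ => E (min 2 (p' M)) (q M) / M)
      (nhdsWithin 0 (Set.Ioi 0)) (nhds 4) ∧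
    Filter.Tendsto (fun M : ℝ => E (min 2 (p' M)) (q M) / M)
      Filter.atTop (nhds 2) := by
  have hF1 : F 1 = 0 := by simp [F]
  have hG1 : G 1 = 0 := by simp [G]
  have hFp : ∀ M : ℝ, 0 < M → F (p' M) = M := fun M hM => (hp M hM).2
  have hGq : ∀ M : ℝ, 0 < M → G (q M) = M := fun M hM => by
    have h := (hq M hM).2
    rwa [one_div, Real.log_inv] at h
  have hF2 : 0 < F 2 := by
    rw [← hF1]; exact F_mono (by norm_num) (by norm_num) one_lt_two
  -- p' tends to 1 from the right as M → 0⁺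
  have hptend : Tendsto p' (𝓝[>] (0:ℝ)) (𝓝[>] (1:ℝ)) := by
    rw [tendsto_nhdsWithin_iff]
    constructor
    · rw [Metric.tendsto_nhds]
      intro ε hε
      have hFe : 0 < F (1 + ε) := by
        rw [← hF1]
        exact F_mono (by norm_num) (by simp; linarith) (by linarith)
      filter_upwards [Ioo_mem_nhdsGT_of_mem ⟨le_refl (0:ℝ), hFe⟩] with M hM
      have h1 := (hp M hM.1).1
      have hlt : p' M < 1 + ε := by
        by_contra hc
        push_neg at hc
        have h2 := F_mono.monotoneOn (by simp; linarith) (by simp; linarith) hc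
        rw [hFp M hM.1] at h2
        linarith [hM.2]
      rw [Real.dist_eq, abs_of_pos (by linarith : (0:ℝ) < p' M - 1)]
      linarith
    · filter_upwards [self_mem_nhdsWithin] with M hM using (hp M hM).1
  -- q tends to 1 from the left as M → 0⁺
  have hqtend : Tendsto q (𝓝[>] (0:ℝ)) (𝓝[<] (1:ℝ)) := by
    rw [tendsto_nhdsWithin_iff]
    constructor
    · rw [Metric.tendsto_nhds]
      intro ε hε
      set c : ℝ := max (1 - ε) (1/2) with hcdef
      have hc1 : c < 1 := max_lt (by linarith) (by norm_num)
      have hc0 : 0 < c := lt_of_lt_of_le (by norm_num) (le_max_right _ _)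
      have hGe : 0 < G c := by
        rw [← hG1]
        exact G_anti ⟨hc0, hc1.le⟩ ⟨one_pos, le_refl 1⟩ hc1
      filter_upwards [Ioo_mem_nhdsGT_of_mem ⟨le_refl (0:ℝ), hGe⟩] with M hM
      obtain ⟨h01, _⟩ := hq M hM.1
      have hgt : c < q M := by
        by_contra hc
        push_neg at hc
        have h2 := G_anti.antitoneOn ⟨h01.1, le_trans hc hc1.le⟩ ⟨hc0, hc1.le⟩ hc
        rw [hGq M hM.1] at h2
        linarith [hM.2]
      rw [Real.dist_eq, abs_of_neg (by linarith [h01.2] : q M - 1 < 0)]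
      have : 1 - ε ≤ c := le_max_left _ _
      linarith
    · filter_upwards [self_mem_nhdsWithin] with M hM
      exact (hq M hM).1.2
  -- composed limits
  have hA : Tendsto (fun M => M / (p' M - 1) ^ 2) (𝓝[>] (0:ℝ)) (𝓝 (1/2)) := by
    have h := lim1.comp hptend
    apply h.congr'
    filter_upwards [self_mem_nhdsWithin] with M hM
    simp only [Function.comp_apply]
    rw [hFp M hM]
  have hB : Tendsto (fun M => M / (1 - q M) ^ 2) (𝓝[>] (0:ℝ)) (𝓝 (1/2)) := by
    have h := lim2.comp hqtend
    apply h.congr'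
    filter_upwards [self_mem_nhdsWithin] with M hM
    simp only [Function.comp_apply]
    rw [hGq M hM]
  have hA' : Tendsto (fun M => (p' M - 1) ^ 2 / M) (𝓝[>] (0:ℝ)) (𝓝 2) := by
    have h := hA.inv₀ (by norm_num)
    norm_num at h
    exact h
  have hB' : Tendsto (fun M => (1 - q M) ^ 2 / M) (𝓝[>] (0:ℝ)) (𝓝 2) := by
    have h := hB.inv₀ (by norm_num)
    norm_num at h
    exact h
  have hprod : Tendsto (fun M => ((p' M - 1) ^ 2 / M) * ((1 - q M) ^ 2 / M))
      (𝓝[>] (0:ℝ)) (𝓝 4) := by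
    have h := hA'.mul hB'
    norm_num at h
    exact h
  have hsq : Tendsto (fun M => Real.sqrt (((p' M - 1) ^ 2 / M) * ((1 - q M) ^ 2 / M)))
      (𝓝[>] (0:ℝ)) (𝓝 2) := by
    have h := hprod.sqrt
    rwa [show Real.sqrt 4 = 2 by
      rw [show (4:ℝ) = 2 ^ 2 by norm_num, Real.sqrt_sq (by norm_num : (0:ℝ) ≤ 2)]] at h
  have hcross : Tendsto (fun M => (p' M - 1) * (1 - q M) / M) (𝓝[>] (0:ℝ)) (𝓝 2) := by
    apply hsq.congr'
    filter_upwards [self_mem_nhdsWithin] with M hM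
    have hM0 : (M:ℝ) ≠ 0 := ne_of_gt hM
    have h1 := (hp M hM).1
    have h2 := (hq M hM).1
    have heq : ((p' M - 1) ^ 2 / M) * ((1 - q M) ^ 2 / M)
        = ((p' M - 1) * (1 - q M) / M) ^ 2 := by
      field_simp
    rw [heq, Real.sqrt_sq
      (div_nonneg (mul_nonneg (by linarith) (by linarith [h2.2])) hM.le)]
  have hsum : Tendsto (fun M => 1 + p' M + (p' M - 1) * (1 - q M) / M)
      (𝓝[>] (0:ℝ)) (𝓝 4) := by
    have hp1 : Tendsto p' (𝓝[>] (0:ℝ)) (𝓝 1) := hptend.mono_right nhdsWithin_le_nhds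
    have hp2 : Tendsto (fun M => 1 + p' M) (𝓝[>] (0:ℝ)) (𝓝 (1 + 1)) :=
      tendsto_const_nhds.add hp1
    have h := hp2.add hcross
    norm_num at h
    exact h
  constructor
  · apply hsum.congr'
    filter_upwards [Ioo_mem_nhdsGT_of_mem ⟨le_refl (0:ℝ), hF2⟩] with M hM
    obtain ⟨h1, he1⟩ := hp M hM.1
    obtain ⟨h2, he2⟩ := hq M hM.1
    have hM0 : (M:ℝ) ≠ 0 := ne_of_gt hM.1
    have hplt : p' M < 2 := by
      by_contra hc
      push_neg at hc
      have h3 := F_mono.monotoneOn (by norm_num) (by simp; linarith) hc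
      rw [hFp M hM.1] at h3
      linarith [hM.2]
    rw [min_eq_right hplt.le]
    have he2' : -Real.log (q M) - (1 - q M) = M := by
      rwa [one_div, Real.log_inv] at he2
    have hEeq : E (p' M) (q M) = M * (1 + p' M) + (p' M - 1) * (1 - q M) := by
      unfold E
      rw [Real.log_div (by linarith) (ne_of_gt h2.1)]
      linear_combination he1 + p' M * he2'
    rw [hEeq]
    field_simp
  · have h0 : Tendsto (fun M : ℝ => (2 * Real.log 2 - q M) / M) atTop (𝓝 0) := by
      apply squeeze_zero_norm' (a := fun M : ℝ => 3 / M)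
      · filter_upwards [eventually_ge_atTop (1:ℝ)] with M hM
        have hM0 : (0:ℝ) < M := by linarith
        obtain ⟨h2, _⟩ := hq M hM0
        have hlog2 : Real.log 2 ≤ 1 := by
          have := Real.log_le_sub_one_of_pos (by norm_num : (0:ℝ) < 2)
          linarith
        have hlog2' : 0 < Real.log 2 := Real.log_pos one_lt_two
        rw [Real.norm_eq_abs, abs_div, abs_of_pos hM0, div_le_div_iff_of_pos_right hM0]
        rw [abs_le]
        constructor <;> [linarith [h2.2]; linarith [h2.1]]
      · exact tendsto_const_nhds.div_atTop tendsto_id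
    have hbase : Tendsto (fun M : ℝ => 2 + (2 * Real.log 2 - q M) / M) atTop (𝓝 2) := by
      have h := Tendsto.add (tendsto_const_nhds (x := (2:ℝ))) h0
      norm_num at h
      exact h
    apply hbase.congr'
    filter_upwards [eventually_ge_atTop (max (F 2) 1)] with M hM
    have hM1 : (1:ℝ) ≤ M := le_trans (le_max_right _ _) hM
    have hM0 : (0:ℝ) < M := by linarith
    obtain ⟨h1, he1⟩ := hp M hM0
    obtain ⟨h2, he2⟩ := hq M hM0
    have hge : 2 ≤ p' M := by
      by_contra hc
      push_neg at hc
      have h3 := F_mono (by simp; linarith) (by norm_num) hc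
      rw [hFp M hM0] at h3
      have := le_trans (le_max_left (F 2) 1) hM
      linarith
    rw [min_eq_left hge]
    have he2' : -Real.log (q M) - (1 - q M) = M := by
      rwa [one_div, Real.log_inv] at he2
    have hEeq : E 2 (q M) = 2 * M + (2 * Real.log 2 - q M) := by
      unfold E
      rw [Real.log_div two_ne_zero (ne_of_gt h2.1)]
      linear_combination 2 * he2'
    rw [hEeq]
    field_simp
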